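/- Let A be a von Neumann algebra, let N be a Hilbert A-module and let M be a closed A-submodule of N with M⊥ = {0} in N. For any finite families x₁,…,x_k and y₁,…,y_k of elements of M and complex numbers λ₁,…,λ_k, the operator T(z) := Σᵢ λᵢ · yᵢ·⟨xᵢ, z⟩ has the same operator norm on M as on N, i.e. sup{‖T(z)‖ : z ∈ M, ‖z‖ ≤ 1} = sup{‖T(z)‖ : z ∈ N, ‖z‖ ≤ 1}. In particular ‖θ_{x,y}‖ computed on M equals ‖θ_{x,y}‖ computed on N for every x, y ∈ M, where θ_{x,y}(z) = y·⟨x,z⟩. -/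

import Mathlib

open scoped RightActions

universe u

/-- A C⋆-algebra is a von Neumann algebra if it is ⋆-isomorphic to a concrete
von Neumann algebra (in the sense of Mathlib's `VonNeumannAlgebra`) acting on
some complex Hilbert space. -/
def IsVonNeumannAlgebra (A : Type u) [CStarAlgebra A] : Prop :=
  ∃ (H : Type u) (_ : NormedAddCommGroup H) (_ : InnerProductSpace ℂ H) (_ : CompleteSpace H)
    (W : VonNeumannAlgebra H), Nonempty (A ≃⋆ₐ[ℂ] W.toStarSubalgebra)

/-- The December 2024 Mathlib notion `CStarModule` (a right Hilbert C⋆-module, with the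
action written `x <• a`), reproduced with its old meaning: current Mathlib's `CStarModule`
is now a left module. -/
class RightCStarModule (A E : Type*) [NonUnitalSemiring A] [StarRing A] [Module ℂ A]
    [AddCommGroup E] [Module ℂ E] [PartialOrder A] [SMul Aᵐᵒᵖ E] [Norm A] [Norm E]
    extends Inner A E where
  inner_add_right {x} {y} {z} : inner x (y + z) = inner x y + inner x z
  inner_self_nonneg {x} : 0 ≤ inner x x
  inner_self {x} : inner x x = 0 ↔ x = 0
  inner_op_smul_right {a : A} {x y : E} : inner x (y <• a) = inner x y * a
  inner_smul_right_complex {z : ℂ} {x} {y} : inner x (z • y) = z • inner x y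
  star_inner x y : star (inner x y) = inner y x
  norm_eq_sqrt_norm_inner_self x : ‖x‖ = √‖inner x x‖

namespace RightCStarModule

variable {A : Type*} [CStarAlgebra A] [PartialOrder A] [StarOrderedRing A]
  {N : Type*} [NormedAddCommGroup N] [NormedSpace ℂ N] [SMul Aᵐᵒᵖ N] [RightCStarModule A N]

/-- additive map `y ↦ ⟪x, y⟫` -/
def innerAdd (x : N) : N →+ A :=
  AddMonoidHom.mk' (fun y => inner (𝕜 := A) x y) (fun _ _ => RightCStarModule.inner_add_right)

lemma inner_sub_right {x y z : N} :
    inner (𝕜 := A) x (y - z) = inner (𝕜 := A) x y - inner (𝕜 := A) x z :=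
  map_sub (RightCStarModule.innerAdd (A := A) x) y z

@[simp] lemma inner_zero_right {x : N} : inner (𝕜 := A) x 0 = 0 :=
  map_zero (RightCStarModule.innerAdd (A := A) x)

@[simp] lemma inner_zero_left {x : N} : inner (𝕜 := A) 0 x = 0 := by
  rw [← RightCStarModule.star_inner, RightCStarModule.inner_zero_right, star_zero]

lemma inner_sum_right {ι : Type*} {s : Finset ι} {x : N} {y : ι → N} :
    inner (𝕜 := A) x (∑ i ∈ s, y i) = ∑ i ∈ s, inner (𝕜 := A) x (y i) :=
  map_sum (RightCStarModule.innerAdd (A := A) x) y s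

lemma inner_sub_left {x y z : N} :
    inner (𝕜 := A) (x - y) z = inner (𝕜 := A) x z - inner (𝕜 := A) y z := by
  rw [← RightCStarModule.star_inner, RightCStarModule.inner_sub_right, star_sub,
    RightCStarModule.star_inner, RightCStarModule.star_inner]

lemma inner_sum_left {ι : Type*} {s : Finset ι} {x : ι → N} {y : N} :
    inner (𝕜 := A) (∑ i ∈ s, x i) y = ∑ i ∈ s, inner (𝕜 := A) (x i) y := by
  rw [← RightCStarModule.star_inner, RightCStarModule.inner_sum_right, star_sum]
  simp only [RightCStarModule.star_inner]

lemma inner_op_smul_left {a : A} {x y : N} :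
    inner (𝕜 := A) (x <• a) y = star a * inner (𝕜 := A) x y := by
  rw [← RightCStarModule.star_inner, RightCStarModule.inner_op_smul_right, star_mul,
    RightCStarModule.star_inner]

lemma inner_smul_left_complex {z : ℂ} {x y : N} :
    inner (𝕜 := A) (z • x) y = star z • inner (𝕜 := A) x y := by
  rw [← RightCStarModule.star_inner, RightCStarModule.inner_smul_right_complex, star_smul,
    RightCStarModule.star_inner]

lemma inner_smul_right_real {r : ℝ} {x y : N} :
    inner (𝕜 := A) x (r • y) = r • inner (𝕜 := A) x y := by
  rw [← Complex.coe_smul r y, RightCStarModule.inner_smul_right_complex, Complex.coe_smul]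

lemma inner_smul_left_real {r : ℝ} {x y : N} :
    inner (𝕜 := A) (r • x) y = r • inner (𝕜 := A) x y := by
  rw [← Complex.coe_smul r x, RightCStarModule.inner_smul_left_complex, Complex.star_def,
    Complex.conj_ofReal, Complex.coe_smul]

lemma norm_sq_eq {x : N} : ‖x‖ ^ 2 = ‖inner (𝕜 := A) x x‖ := by
  rw [RightCStarModule.norm_eq_sqrt_norm_inner_self (A := A) x, Real.sq_sqrt (norm_nonneg _)]

lemma inner_swap_mul_inner_le {x y : N} :
    inner (𝕜 := A) y x * inner (𝕜 := A) x y ≤ ‖x‖ ^ 2 • inner (𝕜 := A) y y := by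
  rcases eq_or_ne x 0 with h | h
  · simp [h]
  · set t : ℝ := ‖x‖ ^ 2 with ht_def
    have ht : 0 < t := by have := norm_pos_iff.mpr h; positivity
    set b := inner (𝕜 := A) x y with hb_def
    have hb : star b = inner (𝕜 := A) y x := RightCStarModule.star_inner x y
    have key : (0 : A) ≤ inner (𝕜 := A) (x <• b - t • y) (x <• b - t • y) :=
      RightCStarModule.inner_self_nonneg
    rw [RightCStarModule.inner_sub_left, RightCStarModule.inner_sub_right,
      RightCStarModule.inner_sub_right, RightCStarModule.inner_op_smul_left,
      RightCStarModule.inner_op_smul_left, RightCStarModule.inner_op_smul_right,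
      RightCStarModule.inner_smul_right_real, RightCStarModule.inner_smul_left_real,
      RightCStarModule.inner_smul_left_real, RightCStarModule.inner_op_smul_right,
      RightCStarModule.inner_smul_right_real, ← hb_def, ← hb, mul_smul_comm] at key
    have hle : star b * (inner (𝕜 := A) x x * b) ≤ t • (star b * b) := by
      rw [← mul_assoc, ht_def, RightCStarModule.norm_sq_eq (A := A)]
      exact CStarAlgebra.star_left_conjugate_le_norm_smul (RightCStarModule.star_inner x x)
    have key2 : (0 : A) ≤ t • (star b * b) - t • (star b * b)
        - (t • (star b * b) - t • t • inner (𝕜 := A) y y) :=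
      le_trans key (sub_le_sub_right (sub_le_sub_right hle _) _)
    have key3 : t • (star b * b) ≤ t • (t • inner (𝕜 := A) y y) := by
      rw [← sub_nonneg]; convert key2 using 1; abel
    rw [hb] at key3
    exact (smul_le_smul_iff_of_pos_left ht).mp key3

variable (N) in
lemma norm_inner_le {x y : N} : ‖inner (𝕜 := A) x y‖ ≤ ‖x‖ * ‖y‖ := by
  have h : ‖inner (𝕜 := A) x y‖ ^ 2 ≤ (‖x‖ * ‖y‖) ^ 2 := by
    calc ‖inner (𝕜 := A) x y‖ ^ 2
        = ‖star (inner (𝕜 := A) x y) * inner (𝕜 := A) x y‖ := by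
          rw [CStarRing.norm_star_mul_self, pow_two]
      _ = ‖inner (𝕜 := A) y x * inner (𝕜 := A) x y‖ := by rw [RightCStarModule.star_inner]
      _ ≤ ‖‖x‖ ^ 2 • inner (𝕜 := A) y y‖ := by
          refine CStarAlgebra.norm_le_norm_of_nonneg_of_le ?_
            RightCStarModule.inner_swap_mul_inner_le
          rw [← RightCStarModule.star_inner x y]
          exact star_mul_self_nonneg _
      _ = ‖x‖ ^ 2 * ‖inner (𝕜 := A) y y‖ := by
          rw [norm_smul, Real.norm_of_nonneg (by positivity)]
      _ = (‖x‖ * ‖y‖) ^ 2 := by rw [← RightCStarModule.norm_sq_eq (x := y)]; ring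
  exact (pow_le_pow_iff_left₀ (norm_nonneg _) (by positivity) (by norm_num)).mp h

attribute [simp] RightCStarModule.inner_op_smul_right RightCStarModule.inner_smul_right_complex

end RightCStarModule

section Aux

variable {A : Type*} [CStarAlgebra A] [PartialOrder A] [StarOrderedRing A]
  {N : Type*} [NormedAddCommGroup N] [NormedSpace ℂ N] [SMul Aᵐᵒᵖ N] [RightCStarModule A N]

/-- right action commutes with complex scalars -/
lemma aux_op_smul_smul_comm (c : ℂ) (a : A) (y : N) : y <• (c • a) = c • (y <• a) := by
  have h : inner (𝕜 := A) (y <• (c • a) - c • (y <• a)) (y <• (c • a) - c • (y <• a)) = 0 := by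
    have hw : ∀ w : N, inner (𝕜 := A) w (y <• (c • a) - c • (y <• a)) = 0 := by
      intro w
      simp [RightCStarModule.inner_sub_right, mul_smul_comm, ← MulOpposite.op_smul]
    exact hw _
  exact sub_eq_zero.mp (RightCStarModule.inner_self.mp h)

lemma aux_op_norm_le (y : N) (a : A) : ‖y <• a‖ ≤ ‖y‖ * ‖a‖ := by
  rcases eq_or_lt_of_le (norm_nonneg (y <• a)) with h | h
  · rw [← h]; positivity
  · have h2 : ‖y <• a‖ ^ 2 = ‖inner (𝕜 := A) (y <• a) (y <• a)‖ := RightCStarModule.norm_sq_eq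
    have h3 : ‖inner (𝕜 := A) (y <• a) (y <• a)‖ ≤ ‖a‖ * (‖y‖ * ‖y <• a‖) := by
      rw [RightCStarModule.inner_op_smul_left]
      calc ‖star a * inner (𝕜 := A) y (y <• a)‖
          ≤ ‖star a‖ * ‖inner (𝕜 := A) y (y <• a)‖ := norm_mul_le _ _
        _ ≤ ‖a‖ * (‖y‖ * ‖y <• a‖) := by
            rw [norm_star]; gcongr; exact RightCStarModule.norm_inner_le N
    have h4 : ‖y <• a‖ * ‖y <• a‖ ≤ (‖y‖ * ‖a‖) * ‖y <• a‖ := by nlinarith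
    exact le_of_mul_le_mul_right h4 h

lemma aux_step (M : Submodule ℂ N) (T S : N → N)
    (hTM : ∀ z, T z ∈ M)
    (hadj : ∀ w z, inner (𝕜 := A) w (T z) = inner (𝕜 := A) (S w) z)
    (hShom : ∀ (c : ℂ) (z : N), S (c • z) = c • S z)
    (hSbdd : BddAbove ((fun z => ‖S z‖) '' {z : N | z ∈ M ∧ ‖z‖ ≤ 1}))
    (z : N) (hz : ‖z‖ ≤ 1) :
    ‖T z‖ ≤ sSup ((fun z => ‖S z‖) '' {z : N | z ∈ M ∧ ‖z‖ ≤ 1}) := by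
  set c := sSup ((fun z => ‖S z‖) '' {z : N | z ∈ M ∧ ‖z‖ ≤ 1}) with hc
  have hzero : (0 : N) ∈ {z : N | z ∈ M ∧ ‖z‖ ≤ 1} := ⟨M.zero_mem, by simp⟩
  have hc0 : 0 ≤ c :=
    le_trans (norm_nonneg (S 0)) (le_csSup hSbdd ⟨0, hzero, rfl⟩)
  have hscaled : ∀ m ∈ M, ‖S m‖ ≤ c * ‖m‖ := by
    intro m hm
    by_cases hm0 : m = 0
    · have hS0 : S (0 : N) = 0 := by
        have := hShom 0 0; simpa using this
      simp [hm0, hS0]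
    · have hmn : ‖m‖ ≠ 0 := norm_ne_zero_iff.mpr hm0
      have hu : ((‖m‖ : ℂ)⁻¹ • m) ∈ {z : N | z ∈ M ∧ ‖z‖ ≤ 1} := by
        refine ⟨M.smul_mem _ hm, ?_⟩
        rw [norm_smul]
        simp [hmn]
      have h1 : ‖S ((‖m‖ : ℂ)⁻¹ • m)‖ ≤ c := le_csSup hSbdd ⟨_, hu, rfl⟩
      rw [hShom, norm_smul] at h1
      have h1' : ‖m‖⁻¹ * ‖S m‖ ≤ c := by simpa using h1
      have h2 := mul_le_mul_of_nonneg_right h1' (norm_nonneg m)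
      rwa [mul_comm (‖m‖⁻¹) (‖S m‖), mul_assoc, inv_mul_cancel₀ hmn, mul_one] at h2
  have hsq : ‖T z‖ ^ 2 ≤ c * ‖T z‖ := by
    have h1 : ‖T z‖ ^ 2 = ‖inner (𝕜 := A) (T z) (T z)‖ := RightCStarModule.norm_sq_eq
    rw [h1, hadj (T z) z]
    calc ‖inner (𝕜 := A) (S (T z)) z‖
        ≤ ‖S (T z)‖ * ‖z‖ := RightCStarModule.norm_inner_le N
      _ ≤ (c * ‖T z‖) * 1 :=
          mul_le_mul (hscaled _ (hTM z)) hz (norm_nonneg z)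
            (by positivity)
      _ = c * ‖T z‖ := by ring
  by_cases h0 : ‖T z‖ = 0
  · rw [h0]; exact hc0
  · have hpos : 0 < ‖T z‖ := lt_of_le_of_ne (norm_nonneg _) (Ne.symm h0)
    have h5 : ‖T z‖ * ‖T z‖ ≤ c * ‖T z‖ := by nlinarith
    exact le_of_mul_le_mul_right h5 hpos

lemma aux_main (M : Submodule ℂ N) (T S : N → N)
    (hTM : ∀ z, T z ∈ M) (hSM : ∀ z, S z ∈ M)
    (hadj : ∀ w z, inner (𝕜 := A) w (T z) = inner (𝕜 := A) (S w) z)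
    (hThom : ∀ (c : ℂ) (z : N), T (c • z) = c • T z)
    (hShom : ∀ (c : ℂ) (z : N), S (c • z) = c • S z)
    (hTbdd : BddAbove ((fun z => ‖T z‖) '' {z : N | ‖z‖ ≤ 1}))
    (hSbdd : BddAbove ((fun z => ‖S z‖) '' {z : N | ‖z‖ ≤ 1})) :
    sSup ((fun z => ‖T z‖) '' {z : N | z ∈ M ∧ ‖z‖ ≤ 1})
      = sSup ((fun z => ‖T z‖) '' {z : N | ‖z‖ ≤ 1}) := by
  have hsub : {z : N | z ∈ M ∧ ‖z‖ ≤ 1} ⊆ {z : N | ‖z‖ ≤ 1} := fun z hz => hz.2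
  have hTbddM : BddAbove ((fun z => ‖T z‖) '' {z : N | z ∈ M ∧ ‖z‖ ≤ 1}) :=
    hTbdd.mono (Set.image_mono hsub)
  have hSbddM : BddAbove ((fun z => ‖S z‖) '' {z : N | z ∈ M ∧ ‖z‖ ≤ 1}) :=
    hSbdd.mono (Set.image_mono hsub)
  have hadj' : ∀ w z, inner (𝕜 := A) w (S z) = inner (𝕜 := A) (T w) z := by
    intro w z
    rw [← RightCStarModule.star_inner z (T w), hadj z w, RightCStarModule.star_inner]
  have hzeroM : (0 : N) ∈ {z : N | z ∈ M ∧ ‖z‖ ≤ 1} := ⟨M.zero_mem, by simp⟩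
  have hzeroN : (0 : N) ∈ {z : N | ‖z‖ ≤ 1} := by simp
  apply le_antisymm
  · exact csSup_le_csSup hTbdd ⟨_, Set.mem_image_of_mem _ hzeroM⟩ (Set.image_mono hsub)
  · refine csSup_le ⟨_, Set.mem_image_of_mem _ hzeroN⟩ ?_
    rintro r ⟨z, hz, rfl⟩
    have h1 : ‖T z‖ ≤ sSup ((fun z => ‖S z‖) '' {z : N | z ∈ M ∧ ‖z‖ ≤ 1}) :=
      aux_step M T S hTM hadj hShom hSbddM z hz
    have h2 : sSup ((fun z => ‖S z‖) '' {z : N | z ∈ M ∧ ‖z‖ ≤ 1})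
        ≤ sSup ((fun z => ‖T z‖) '' {z : N | z ∈ M ∧ ‖z‖ ≤ 1}) := by
      refine csSup_le ⟨_, Set.mem_image_of_mem _ hzeroM⟩ ?_
      rintro r ⟨m, hm, rfl⟩
      exact aux_step M S T hSM hadj' hThom hTbddM m hm.2
    exact h1.trans h2

end Aux

/-- Let `A` be a von Neumann algebra, `N` a Hilbert `A`-module and `M` a closed
`A`-submodule with `M⊥ = {0}` in `N`.  For finite families `x i, y i ∈ M` and scalars
`λ i ∈ ℂ`, the operator `T(z) = Σ i, λ i • (y i) ⬝ ⟪x i, z⟫` has the same operator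
norm on `M` as on `N`; in particular `‖θ_{x,y}‖` computed on `M` equals `‖θ_{x,y}‖`
computed on `N` for all `x, y ∈ M`. -/
theorem finite_rank_operator_norm_eq_on_dense_submodule
    {A : Type u} [CStarAlgebra A] [PartialOrder A] [StarOrderedRing A]
    (hA : IsVonNeumannAlgebra A)
    {N : Type*} [NormedAddCommGroup N] [NormedSpace ℂ N] [SMul Aᵐᵒᵖ N] [RightCStarModule A N]
    [CompleteSpace N]
    -- `M` is a closed `A`-submodule of `N`
    (M : Submodule ℂ N) (hMclosed : IsClosed (M : Set N))
    (hMsmul : ∀ (a : A), ∀ m ∈ M, m <• a ∈ M)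
    -- `M⊥ = {0}` in `N`
    (hMbot : ∀ n : N, (∀ m ∈ M, inner (𝕜 := A) m n = 0) → n = 0) :
    -- the general finite-sum statement
    (∀ (k : ℕ) (x y : Fin k → N), (∀ i, x i ∈ M) → (∀ i, y i ∈ M) →
      ∀ lam : Fin k → ℂ,
      sSup ((fun z : N => ‖∑ i, lam i • ((y i) <• (inner (𝕜 := A) (x i) z))‖) ''
          {z : N | z ∈ M ∧ ‖z‖ ≤ 1})
        = sSup ((fun z : N => ‖∑ i, lam i • ((y i) <• (inner (𝕜 := A) (x i) z))‖) ''
          {z : N | ‖z‖ ≤ 1})) ∧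
    -- in particular, for the elementary operators `θ_{x,y}`
    (∀ x ∈ M, ∀ y ∈ M,
      sSup ((fun z : N => ‖y <• (inner (𝕜 := A) x z)‖) '' {z : N | z ∈ M ∧ ‖z‖ ≤ 1})
        = sSup ((fun z : N => ‖y <• (inner (𝕜 := A) x z)‖) '' {z : N | ‖z‖ ≤ 1})) := by
  have main : ∀ (k : ℕ) (x y : Fin k → N), (∀ i, x i ∈ M) → (∀ i, y i ∈ M) →
      ∀ lam : Fin k → ℂ,
      sSup ((fun z : N => ‖∑ i, lam i • ((y i) <• (inner (𝕜 := A) (x i) z))‖) ''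
          {z : N | z ∈ M ∧ ‖z‖ ≤ 1})
        = sSup ((fun z : N => ‖∑ i, lam i • ((y i) <• (inner (𝕜 := A) (x i) z))‖) ''
          {z : N | ‖z‖ ≤ 1}) := by
    intro k x y hx hy lam
    -- generic facts about operators of this shape
    have memM : ∀ (mu : Fin k → ℂ) (u v : Fin k → N), (∀ i, v i ∈ M) →
        ∀ z : N, (∑ i, mu i • ((v i) <• (inner (𝕜 := A) (u i) z))) ∈ M := by
      intro mu u v hv z
      exact Submodule.sum_mem M fun i _ =>
        M.smul_mem _ (hMsmul _ _ (hv i))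
    have hom : ∀ (mu : Fin k → ℂ) (u v : Fin k → N) (c : ℂ) (z : N),
        (∑ i, mu i • ((v i) <• (inner (𝕜 := A) (u i) (c • z))))
          = c • ∑ i, mu i • ((v i) <• (inner (𝕜 := A) (u i) z)) := by
      intro mu u v c z
      rw [Finset.smul_sum]
      refine Finset.sum_congr rfl fun i _ => ?_
      rw [RightCStarModule.inner_smul_right_complex, aux_op_smul_smul_comm, smul_comm]
    have bdd : ∀ (mu : Fin k → ℂ) (u v : Fin k → N),
        BddAbove ((fun z : N => ‖∑ i, mu i • ((v i) <• (inner (𝕜 := A) (u i) z))‖) ''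
          {z : N | ‖z‖ ≤ 1}) := by
      intro mu u v
      refine ⟨∑ i, ‖mu i‖ * (‖v i‖ * ‖u i‖), ?_⟩
      rintro r ⟨z, hz, rfl⟩
      calc ‖∑ i, mu i • ((v i) <• (inner (𝕜 := A) (u i) z))‖
          ≤ ∑ i, ‖mu i • ((v i) <• (inner (𝕜 := A) (u i) z))‖ := norm_sum_le _ _
        _ ≤ ∑ i, ‖mu i‖ * (‖v i‖ * ‖u i‖) := by
            refine Finset.sum_le_sum fun i _ => ?_
            rw [norm_smul]
            refine mul_le_mul_of_nonneg_left ?_ (norm_nonneg _)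
            calc ‖(v i) <• (inner (𝕜 := A) (u i) z)‖
                ≤ ‖v i‖ * ‖inner (𝕜 := A) (u i) z‖ := aux_op_norm_le _ _
              _ ≤ ‖v i‖ * (‖u i‖ * ‖z‖) := by
                  gcongr; exact RightCStarModule.norm_inner_le N
              _ ≤ ‖v i‖ * (‖u i‖ * 1) := by gcongr; exact hz
              _ = ‖v i‖ * ‖u i‖ := by ring
    have hadj : ∀ w z : N,
        inner (𝕜 := A) w (∑ i, lam i • ((y i) <• (inner (𝕜 := A) (x i) z)))
          = inner (𝕜 := A)
              (∑ i, (starRingEnd ℂ) (lam i) • ((x i) <• (inner (𝕜 := A) (y i) w))) z := by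
      intro w z
      rw [RightCStarModule.inner_sum_right, RightCStarModule.inner_sum_left]
      refine Finset.sum_congr rfl fun i _ => ?_
      rw [RightCStarModule.inner_smul_right_complex, RightCStarModule.inner_op_smul_right,
        RightCStarModule.inner_smul_left_complex, RightCStarModule.inner_op_smul_left,
        RightCStarModule.star_inner]
      simp [mul_smul_comm]
    exact aux_main M _ _ (memM lam x y hy) (memM (fun i => (starRingEnd ℂ) (lam i)) y x hx)
      hadj (hom lam x y) (hom (fun i => (starRingEnd ℂ) (lam i)) y x)
      (bdd lam x y) (bdd (fun i => (starRingEnd ℂ) (lam i)) y x)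
  refine ⟨main, fun x hx y hy => ?_⟩
  have h := main 1 (fun _ => x) (fun _ => y) (fun _ => hx) (fun _ => hy) (fun _ => 1)
  simpa using h
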